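/- With x = 1 + cos c regarded as a variable for a spherical triangle with fixed sides a, b, the area satisfies d|σ|/dx = (cos a + cos b − x)/(x·D), where D = sin a sin b sin C and |σ| = 2 arctan(D/u) with u = cos a + cos b + x. -/

import Mathlib

open Real Set

/-- With `x = 1 + cos c` regarded as a variable for a spherical triangle with
fixed sides `a, b`, setting `u(x) = cos a + cos b + x`,
`D(x) = √(-(cos a + cos b)² + 2(cos a cos b + 1) x - x²)` (`= sin a sin b sin C`)
and `|σ|(x) = 2 arctan (D(x)/u(x))`, one has
`d|σ|/dx = (cos a + cos b - x)/(x · D(x))`. -/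
theorem spherical_area_deriv_in_x
    (a b : ℝ) (ha : a ∈ Ioo 0 π) (hb : b ∈ Ioo 0 π)
    (u D S : ℝ → ℝ)
    (hu : ∀ x, u x = Real.cos a + Real.cos b + x)
    (hD : ∀ x, D x = Real.sqrt
      (-(Real.cos a + Real.cos b) ^ 2 + 2 * (Real.cos a * Real.cos b + 1) * x - x ^ 2))
    (hS : ∀ x, S x = 2 * Real.arctan (D x / u x))
    (x₀ : ℝ) (hx₀ : x₀ ∈ Ioo (0:ℝ) 2)
    (hD₀ : 0 < D x₀) (hu₀ : 0 < u x₀) :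
    HasDerivAt S ((Real.cos a + Real.cos b - x₀) / (x₀ * D x₀)) x₀ := by
  set ca := Real.cos a
  set cb := Real.cos b
  set P : ℝ → ℝ := fun x => -(ca + cb) ^ 2 + 2 * (ca * cb + 1) * x - x ^ 2 with hPdef
  have hx0 : (0:ℝ) < x₀ := hx₀.1
  have hPpos : 0 < P x₀ := by
    have := hD₀
    rw [hD x₀] at this
    exact Real.sqrt_pos.mp this
  have hDval : D x₀ = Real.sqrt (P x₀) := hD x₀
  have hDsq : D x₀ ^ 2 = P x₀ := by
    rw [hDval]; exact Real.sq_sqrt hPpos.le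
  have hP' : HasDerivAt P (2 * (ca * cb + 1) - 2 * x₀) x₀ := by
    have h1 : HasDerivAt (fun x : ℝ => -(ca + cb) ^ 2 + 2 * (ca * cb + 1) * x)
        (2 * (ca * cb + 1)) x₀ := by
      simpa using ((hasDerivAt_id x₀).const_mul (2 * (ca * cb + 1))).const_add
        (-(ca + cb) ^ 2)
    have h2 : HasDerivAt (fun x : ℝ => x ^ 2) (2 * x₀) x₀ := by
      simpa using hasDerivAt_pow 2 x₀
    exact h1.sub h2
  have hDderiv : HasDerivAt D ((2 * (ca * cb + 1) - 2 * x₀) / (2 * Real.sqrt (P x₀))) x₀ := by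
    have hDf : D = fun x => Real.sqrt (P x) := funext hD
    rw [hDf]
    exact hP'.sqrt hPpos.ne'
  have hu' : HasDerivAt u 1 x₀ := by
    have huf : u = fun x => ca + cb + x := funext hu
    rw [huf]
    simpa using (hasDerivAt_id x₀).const_add (ca + cb)
  have hune : u x₀ ≠ 0 := hu₀.ne'
  have hdiv : HasDerivAt (fun x => D x / u x)
      ((((2 * (ca * cb + 1) - 2 * x₀) / (2 * Real.sqrt (P x₀))) * u x₀ - D x₀ * 1) / u x₀ ^ 2)
      x₀ := hDderiv.div hu' hune
  have harc : HasDerivAt S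
      (2 * (1 / (1 + (D x₀ / u x₀) ^ 2) *
        ((((2 * (ca * cb + 1) - 2 * x₀) / (2 * Real.sqrt (P x₀))) * u x₀ - D x₀ * 1) / u x₀ ^ 2)))
      x₀ := by
    have hSf : S = fun x => 2 * Real.arctan (D x / u x) := funext hS
    rw [hSf]
    exact hdiv.arctan.const_mul 2
  convert harc using 1
  have hsq : Real.sqrt (P x₀) = D x₀ := hDval.symm
  rw [hsq]
  have hDne : D x₀ ≠ 0 := hD₀.ne'
  have h1d : (0:ℝ) < 1 + (D x₀ / u x₀) ^ 2 := by positivity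
  have huv : u x₀ = ca + cb + x₀ := hu x₀
  have hDsq' : D x₀ ^ 2 = -(ca + cb) ^ 2 + 2 * (ca * cb + 1) * x₀ - x₀ ^ 2 := hDsq
  field_simp
  rw [huv]
  linear_combination (ca + cb + x₀) * hDsq'
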